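/- Let ζ : G → H be a Riemannian covering map with H compact, let h, h' ∈ H with d_H(h,h') < sys(H)/2, and let g ∈ G with ζ(g) = h. Then there exists a unique preimage g' of h' with d_G(g,g') < sys(H)/2, and this g' satisfies d_G(g,g') = d_H(h,h'). -/

import Mathlib

/-- The length of a path in a pseudo-emetric space, as the total variation of the path. -/
noncomputable def pathLength {X : Type*} [PseudoEMetricSpace X] {x y : X}
    (γ : Path x y) : ENNReal :=
  eVariationOn (fun t => γ t) Set.univ

/-- The systole of a space: the infimum of lengths of non-nullhomotopic loops. -/
noncomputable def systole (H : Type*) [PseudoEMetricSpace H] : ENNReal :=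
  sInf {L : ENNReal | ∃ (x : H) (γ : Path x x),
    ¬ Path.Homotopic γ (Path.refl x) ∧ L = pathLength γ}

open Set unitInterval Topology

section Helpers

lemma isPreconnected_Icc_I (a b : unitInterval) : IsPreconnected (Icc a b) := by
  have h1 : Icc a b = (Subtype.val) ⁻¹' (Icc (a : ℝ) (b : ℝ)) := by
    ext x; simp [Subtype.coe_le_coe]
  have h2 : (Subtype.val) '' (Icc a b) = Icc (a : ℝ) (b : ℝ) := by
    rw [h1, Subtype.image_preimage_coe]
    exact inter_eq_right.2 (Icc_subset_Icc a.2.1 b.2.2)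
  rw [← IsInducing.subtypeVal.isPreconnected_image, h2]
  exact isPreconnected_Icc

variable {E X : Type*} [TopologicalSpace E] [TopologicalSpace X] {p : E → X}

/-- On a preconnected set whose image stays in the base set of a trivialization with discrete
fiber, the sheet index is constant. -/
lemma sheet_const {F : Type*} [TopologicalSpace F] [DiscreteTopology F]
    (Tr : Bundle.Trivialization F p)
    {A : Type*} [TopologicalSpace A] {s : Set A}
    (hs : IsPreconnected s) {φ : A → E} (hφ : ContinuousOn φ s)
    (hmem : ∀ a ∈ s, p (φ a) ∈ Tr.baseSet) {a₀ a₁ : A} (h₀ : a₀ ∈ s) (h₁ : a₁ ∈ s) :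
    (Tr (φ a₀)).2 = (Tr (φ a₁)).2 := by
  have hsrc : ∀ a ∈ s, φ a ∈ Tr.source := fun a ha => Tr.mem_source.2 (hmem a ha)
  have hcont : ContinuousOn (fun a => (Tr (φ a)).2) s :=
    continuous_snd.comp_continuousOn (Tr.continuousOn_toFun.comp hφ hsrc)
  have himg : IsPreconnected ((fun a => (Tr (φ a)).2) '' s) := hs.image _ hcont
  exact himg.subsingleton (mem_image_of_mem _ h₀) (mem_image_of_mem _ h₁)

/-- Path lifting for covering maps. -/
lemma IsCoveringMap.lift_exists (hp : IsCoveringMap p) (γ : C(unitInterval, X)) (e₀ : E)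
    (he : p e₀ = γ 0) : ∃ Γ : C(unitInterval, E), (∀ t, p (Γ t) = γ t) ∧ Γ 0 = e₀ := by
  obtain ⟨Γ, h1, h2⟩ := hp.exists_path_lifts γ e₀ he.symm
  exact ⟨Γ, fun t => congrFun h1 t, h2⟩

/-- Monodromy: lifts (with common starting point) of homotopic paths have the same endpoint. -/
lemma IsCoveringMap.monodromy' (hp : IsCoveringMap p) {x y : X} {q r : Path x y}
    (hst : q.Homotopic r) {Γq Γr : C(unitInterval, E)}
    (hpq : ∀ t, p (Γq t) = q t) (hpr : ∀ t, p (Γr t) = r t) (h0 : Γq 0 = Γr 0) :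
    Γq 1 = Γr 1 := by
  have h0q : q.toContinuousMap 0 = p (Γq 0) := by rw [hpq]; rfl
  have h0r : r.toContinuousMap 0 = p (Γq 0) := by rw [h0, hpr]; rfl
  have eq1 : Γq = hp.liftPath q.toContinuousMap (Γq 0) h0q :=
    (hp.eq_liftPath_iff' h0q).2 ⟨funext hpq, rfl⟩
  have eq2 : Γr = hp.liftPath r.toContinuousMap (Γq 0) h0r :=
    (hp.eq_liftPath_iff' h0r).2 ⟨funext hpr, h0.symm⟩
  have := hp.liftPath_apply_one_eq_of_homotopicRel hst (Γq 0) h0q h0r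
  rw [← eq1, ← eq2] at this
  exact this

lemma eVariationOn_congr_edist {α E F : Type*} [LinearOrder α] [PseudoEMetricSpace E]
    [PseudoEMetricSpace F] (f : α → E) (f' : α → F) (s : Set α)
    (h : ∀ u ∈ s, ∀ v ∈ s, edist (f u) (f v) = edist (f' u) (f' v)) :
    eVariationOn f s = eVariationOn f' s := by
  dsimp only [eVariationOn]
  congr 1
  funext pp
  exact Finset.sum_congr rfl fun i _ => h _ (pp.2.2.2 _) _ (pp.2.2.2 _)

lemma evar_comp_eq {G H : Type*} [PseudoEMetricSpace G] [PseudoEMetricSpace H] (ζ : G → H)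
    (hloc : ∀ g : G, ∃ V ∈ nhds g, ∀ a ∈ V, ∀ b ∈ V, edist (ζ a) (ζ b) = edist a b)
    {γ : unitInterval → G} (hγ : Continuous γ) :
    eVariationOn (fun u => ζ (γ u)) univ = eVariationOn γ univ := by
  classical
  choose V hVnhds hViso using hloc
  obtain ⟨t, ht0, htmono, ⟨N, htN⟩, hsub⟩ :=
    exists_monotone_Icc_subset_open_cover_unitInterval
      (c := fun s : unitInterval => γ ⁻¹' (interior (V (γ s))))
      (fun s => isOpen_interior.preimage hγ)
      (fun s _ => mem_iUnion.2 ⟨s, mem_interior_iff_mem_nhds.2 (hVnhds (γ s))⟩)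
  choose idx hidx using hsub
  have hpiece : ∀ n, eVariationOn (fun u => ζ (γ u)) (Icc (t n) (t (n + 1))) =
      eVariationOn γ (Icc (t n) (t (n + 1))) := by
    intro n
    refine eVariationOn_congr_edist _ _ _ fun u hu v hv => ?_
    exact hViso (γ (idx n)) _ (interior_subset (hidx n hu)) _ (interior_subset (hidx n hv))
  have key : ∀ n, eVariationOn (fun u => ζ (γ u)) (univ ∩ Icc (t 0) (t n)) =
      eVariationOn γ (univ ∩ Icc (t 0) (t n)) := by
    intro n
    induction n with
    | zero =>
      rw [eVariationOn.subsingleton _ ?_, eVariationOn.subsingleton _ ?_] <;>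
        · rw [univ_inter, Icc_self]; exact subsingleton_singleton
    | succ n ih =>
      rw [← eVariationOn.Icc_add_Icc (fun u => ζ (γ u)) (htmono (Nat.zero_le n))
          (htmono (Nat.le_succ n)) (mem_univ _),
        ← eVariationOn.Icc_add_Icc γ (htmono (Nat.zero_le n))
          (htmono (Nat.le_succ n)) (mem_univ _), ih]
      congr 1 <;> rw [univ_inter]
      exact hpiece n
  have huniv : (univ : Set unitInterval) = univ ∩ Icc (t 0) (t N) := by
    rw [univ_inter, ht0, htN N le_rfl]
    ext u
    exact ⟨fun _ => ⟨unitInterval.nonneg', unitInterval.le_one'⟩, fun _ => mem_univ u⟩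
  rw [huniv]
  exact key N

variable {Y : Type*} [PseudoEMetricSpace Y]

lemma pathLength_symm {x y : Y} (γ : Path x y) : pathLength γ.symm = pathLength γ := by
  unfold pathLength
  have h1 : EqOn (fun t => γ.symm t) ((fun t => γ t) ∘ unitInterval.symm) univ :=
    fun t _ => rfl
  have hanti : AntitoneOn unitInterval.symm univ := by
    intro a _ b _ hab
    rw [← Subtype.coe_le_coe, unitInterval.coe_symm_eq, unitInterval.coe_symm_eq]
    have h : (a : ℝ) ≤ b := hab
    linarith
  rw [eVariationOn.eq_of_eqOn h1, eVariationOn.comp_eq_of_antitoneOn _ _ hanti]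
  congr 1
  rw [image_univ]
  exact (unitInterval.symm_involutive.surjective).range_eq

lemma aux_half_mem : (1/2 : ℝ) ∈ unitInterval := by norm_num [unitInterval]

lemma pathLength_trans_le {x y z : Y} (γ : Path x y) (γ' : Path y z) :
    pathLength (γ.trans γ') ≤ pathLength γ + pathLength γ' := by
  set half : unitInterval := ⟨1/2, aux_half_mem⟩ with hhalf
  have h0h : (0 : unitInterval) ≤ half := Subtype.mk_le_mk.2 (by norm_num)
  have hh1 : half ≤ (1 : unitInterval) := Subtype.mk_le_mk.2 (by norm_num)
  have huniv : (univ : Set unitInterval) = univ ∩ Icc 0 1 := by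
    rw [univ_inter]
    ext u
    exact ⟨fun _ => ⟨unitInterval.nonneg', unitInterval.le_one'⟩, fun _ => mem_univ u⟩
  unfold pathLength
  calc eVariationOn (fun t => (γ.trans γ') t) univ
      = eVariationOn (fun t => (γ.trans γ') t) (univ ∩ Icc 0 half)
        + eVariationOn (fun t => (γ.trans γ') t) (univ ∩ Icc half 1) := by
        rw [eVariationOn.Icc_add_Icc _ h0h hh1 (mem_univ _), ← huniv]
    _ ≤ eVariationOn (fun t => γ t) univ + eVariationOn (fun t => γ' t) univ := by
        gcongr
        · rw [univ_inter]
          set φ : unitInterval → unitInterval :=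
            fun s => Set.projIcc 0 1 zero_le_one (2 * (s : ℝ)) with hφ
          have heq : EqOn (fun t => (γ.trans γ') t) ((fun t => γ t) ∘ φ) (Icc 0 half) := by
            intro s hs
            have hs2 : (s : ℝ) ≤ 1/2 := hs.2
            have hs0 : (0:ℝ) ≤ s := s.2.1
            have hmem2 : 2 * (s : ℝ) ∈ Icc (0:ℝ) 1 :=
              ⟨by linarith, by linarith⟩
            simp only [Function.comp_apply, hφ, Path.trans_apply, dif_pos hs2]
            congr 1
            rw [Set.projIcc_of_mem zero_le_one hmem2]
          have hmono : MonotoneOn φ (Icc 0 half) := by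
            intro a _ b _ hab
            exact monotone_projIcc zero_le_one (by
              have := Subtype.coe_le_coe.2 hab; linarith)
          rw [eVariationOn.eq_of_eqOn heq]
          exact eVariationOn.comp_le_of_monotoneOn _ φ hmono (mapsTo_univ _ _)
        · rw [univ_inter]
          set φ : unitInterval → unitInterval :=
            fun s => Set.projIcc 0 1 zero_le_one (2 * (s : ℝ) - 1) with hφ
          have heq : EqOn (fun t => (γ.trans γ') t) ((fun t => γ' t) ∘ φ) (Icc half 1) := by
            intro s hs
            have hs2 : (1:ℝ)/2 ≤ (s : ℝ) := hs.1
            by_cases hle : (s : ℝ) ≤ 1/2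
            · have hseq : (s : ℝ) = 1/2 := le_antisymm hle hs2
              have hsh : s = half := Subtype.ext hseq
              rw [hsh]
              show (γ.trans γ') half = γ' (φ half)
              have h2 : φ half = 0 := by
                apply Subtype.ext
                simp only [hφ, Set.coe_projIcc]
                norm_num
              rw [h2, γ'.source, Path.trans_apply]
              have hc : ((half : unitInterval) : ℝ) ≤ 1/2 := by norm_num
              rw [dif_pos hc]
              have h3 : ∀ hh : 2 * ((half : unitInterval) : ℝ) ∈ unitInterval,
                  (⟨2 * ((half : unitInterval) : ℝ), hh⟩ : unitInterval) = 1 :=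
                fun hh => Subtype.ext (by norm_num)
              rw [h3]
              exact γ.target
            · have hmem2 : 2 * (s : ℝ) - 1 ∈ Icc (0:ℝ) 1 := by
                constructor
                · linarith
                · have : (s:ℝ) ≤ 1 := s.2.2
                  linarith
              simp only [Function.comp_apply, hφ, Path.trans_apply, dif_neg hle]
              congr 1
              rw [Set.projIcc_of_mem zero_le_one hmem2]
          have hmono : MonotoneOn φ (Icc half 1) := by
            intro a _ b _ hab
            exact monotone_projIcc zero_le_one (by
              have := Subtype.coe_le_coe.2 hab; linarith)
          rw [eVariationOn.eq_of_eqOn heq]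
          exact eVariationOn.comp_le_of_monotoneOn _ φ hmono (mapsTo_univ _ _)

end Helpers

/-- Metrically controlled path lifting: for a Riemannian covering map `ζ : G → H`
(modeled as geodesic emetric spaces, `ζ` a local isometry) with `H` compact, if
`d_H(h, h') < sys(H)/2` and `ζ g = h`, then there is a unique preimage `g'` of `h'`
with `d_G(g, g') < sys(H)/2`, and it satisfies `d_G(g, g') = d_H(h, h')`. -/
theorem riemannian_covering_metric_lift
    (G H : Type*) [EMetricSpace G] [EMetricSpace H] [CompactSpace H]
    (hGgeo : ∀ x y : G, edist x y = sInf {L : ENNReal | ∃ γ : Path x y, L = pathLength γ})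
    (hHgeo : ∀ x y : H, edist x y = sInf {L : ENNReal | ∃ γ : Path x y, L = pathLength γ})
    (ζ : G → H) (hcov : IsCoveringMap ζ)
    (hloc : ∀ g : G, ∃ V ∈ nhds g, ∀ a ∈ V, ∀ b ∈ V, edist (ζ a) (ζ b) = edist a b)
    (h h' : H) (hd : edist h h' < systole H / 2)
    (g : G) (hg : ζ g = h) :
    ∃ g' : G, ζ g' = h' ∧ edist g g' < systole H / 2 ∧ edist g g' = edist h h' ∧
      ∀ g'' : G, ζ g'' = h' → edist g g'' < systole H / 2 → g'' = g' := by
  classical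
  have hζc : Continuous ζ := hcov.continuous
  have hmap_len : ∀ (a b : G) (γ : Path a b),
      pathLength (γ.map hζc) = pathLength γ := by
    intro a b γ
    unfold pathLength
    have h1 : EqOn (fun t => (γ.map hζc) t) (fun t => ζ (γ t)) univ := fun t _ => rfl
    rw [eVariationOn.eq_of_eqOn h1]
    exact evar_comp_eq ζ hloc γ.continuous
  have hlip : ∀ a b : G, edist (ζ a) (ζ b) ≤ edist a b := by
    intro a b
    rw [hHgeo, hGgeo]
    refine le_sInf ?_
    rintro L ⟨γ, rfl⟩
    exact sInf_le ⟨γ.map hζc, (hmap_len a b γ).symm⟩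
  have hliftH : ∀ sp : Path h h', ∃ gE : G, ζ gE = h' ∧ edist g gE ≤ pathLength sp := by
    intro sp
    obtain ⟨Γ, hΓp, hΓ0⟩ := hcov.lift_exists sp.toContinuousMap g
      (by rw [hg]; exact sp.source.symm)
    refine ⟨Γ 1, by rw [hΓp]; exact sp.target, ?_⟩
    rw [hGgeo]
    refine sInf_le ⟨⟨Γ, hΓ0, rfl⟩, ?_⟩
    show eVariationOn (fun t => sp t) univ = eVariationOn (fun t => Γ t) univ
    rw [← evar_comp_eq ζ hloc Γ.continuous]
    exact eVariationOn.eq_of_eqOn fun t _ => (hΓp t).symm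
  have uniq : ∀ g₁ g₂ : G, ζ g₁ = h' → ζ g₂ = h' →
      edist g g₁ < systole H / 2 → edist g g₂ < systole H / 2 → g₁ = g₂ := by
    intro g₁ g₂ h₁ h₂ hd₁ hd₂
    rw [hGgeo] at hd₁ hd₂
    obtain ⟨L₁, ⟨α, rfl⟩, hα⟩ := sInf_lt_iff.1 hd₁
    obtain ⟨L₂, ⟨β, rfl⟩, hβ⟩ := sInf_lt_iff.1 hd₂
    set pα := α.map hζc with hpα
    set pβ := β.map hζc with hpβ
    set LP : Path h' h' := (pα.symm.trans pβ).cast h₁.symm h₂.symm with hLPdef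
    have hlen : pathLength LP < systole H := by
      have e1 : pathLength LP = pathLength (pα.symm.trans pβ) := by
        unfold pathLength
        exact eVariationOn.eq_of_eqOn fun t _ => rfl
      calc pathLength LP ≤ pathLength pα.symm + pathLength pβ := by
            rw [e1]; exact pathLength_trans_le _ _
        _ = pathLength α + pathLength β := by
            rw [pathLength_symm, hpα, hpβ, hmap_len, hmap_len]
        _ < systole H / 2 + systole H / 2 := ENNReal.add_lt_add hα hβ
        _ = systole H := ENNReal.add_halves _
    have hnull : LP.Homotopic (Path.refl h') := by
      by_contra hn
      exact absurd (sInf_le ⟨h', LP, hn, rfl⟩ : systole H ≤ pathLength LP) (not_le.2 hlen)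
    set Λ : Path g₁ g₂ := α.symm.trans β with hΛdef
    have hΛmap : Λ.map hζc = pα.symm.trans pβ := by
      rw [hΛdef, Path.map_trans, hpα, hpβ, ← Path.map_symm]
    have hproj : ∀ u, ζ (Λ u) = LP u := by
      intro u
      have h1 : ζ (Λ u) = (Λ.map hζc) u := rfl
      rw [h1, hΛmap]
      rfl
    have hmono := hcov.monodromy' (hst := hnull)
      (Γq := ⟨fun u => Λ u, Λ.continuous⟩) (Γr := ContinuousMap.const _ g₁)
      hproj (fun u => by simp only [ContinuousMap.const_apply, Path.refl_apply]; exact h₁)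
      (by show Λ 0 = g₁; exact Λ.source)
    have hend : Λ 1 = g₁ := hmono
    rw [← hend]
    exact Λ.target
  have hd' := hd
  rw [hHgeo] at hd'
  obtain ⟨L₀, ⟨sp0, rfl⟩, hsp0⟩ := sInf_lt_iff.1 hd'
  obtain ⟨g', hζg', hle⟩ := hliftH sp0
  have hlt : edist g g' < systole H / 2 := lt_of_le_of_lt hle hsp0
  have hub : edist g g' ≤ edist h h' := by
    rw [hHgeo]
    refine le_sInf ?_
    rintro L ⟨sp', rfl⟩
    rcases lt_or_ge (pathLength sp') (systole H / 2) with hc | hc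
    · obtain ⟨g'', hζg'', hle''⟩ := hliftH sp'
      have he := uniq g'' g' hζg'' hζg' (lt_of_le_of_lt hle'' hc) hlt
      rw [← he]
      exact hle''
    · exact le_trans hlt.le hc
  have hlb : edist h h' ≤ edist g g' := by
    calc edist h h' = edist (ζ g) (ζ g') := by rw [hg, hζg']
      _ ≤ edist g g' := hlip g g'
  exact ⟨g', hζg', hlt, le_antisymm hub hlb,
    fun g'' h'' hd'' => uniq g'' g' h'' hζg' hd'' hlt⟩
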